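/- Let q ≥ 1 and let a_1, ..., a_n be residues mod q, each coprime to q. Then the number of subsets I ⊆ [n] with ∑_{i∈I} a_i ≡ 0 (mod q) is at most C(n, ⌊n/2⌋)_q, the middle mod-q binomial coefficient. -/

import Mathlib

/-- The mod-q binomial coefficient `C(n,s)_q = ∑_{0 ≤ j ≤ n, j ≡ s (mod q)} C(n,j)`. -/
def modBinom (n q : ℕ) (s : ℤ) : ℕ :=
  ∑ j ∈ Finset.range (n + 1), if ((j : ℤ) - s) % (q : ℤ) = 0 then n.choose j else 0

lemma emod_cond_neg {q : ℕ} {x y : ℤ} (h : x + y = 0) :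
    (x % q = 0) ↔ (y % q = 0) := by
  rw [← Int.dvd_iff_emod_eq_zero, ← Int.dvd_iff_emod_eq_zero]
  have : y = -x := by linarith
  subst this
  exact (dvd_neg).symm

lemma emod_cond_congr {q : ℕ} {x y : ℤ} (h : (q:ℤ) ∣ (x - y)) :
    (x % q = 0) ↔ (y % q = 0) := by
  rw [← Int.dvd_iff_emod_eq_zero, ← Int.dvd_iff_emod_eq_zero]
  constructor
  · intro hd; have := dvd_sub hd h; simpa using this
  · intro hd; have := dvd_add hd h; simpa using this

lemma modBinom_congr (n q : ℕ) {s s' : ℤ} (h : (q:ℤ) ∣ (s - s')) :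
    modBinom n q s = modBinom n q s' := by
  unfold modBinom
  refine Finset.sum_congr rfl fun j _ => ?_
  obtain ⟨c, hc⟩ := h
  have : ((j:ℤ) - s) % q = 0 ↔ ((j:ℤ) - s') % q = 0 :=
    emod_cond_congr ⟨-c, by linarith⟩
  simp [this]

lemma modBinom_symm (n q : ℕ) (s : ℤ) : modBinom n q s = modBinom n q ((n:ℤ) - s) := by
  unfold modBinom
  conv_rhs => rw [← Finset.sum_range_reflect]
  refine Finset.sum_congr rfl fun j hj => ?_
  simp only [Finset.mem_range, Nat.add_sub_cancel] at hj ⊢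
  have hj' : j ≤ n := by omega
  have h1 : ((n - j : ℕ) : ℤ) = (n:ℤ) - j := by omega
  rw [h1]
  have hcond : ((j:ℤ) - s) % q = 0 ↔ ((n:ℤ) - j - ((n:ℤ) - s)) % q = 0 :=
    emod_cond_neg (by ring)
  rw [Nat.choose_symm hj']
  simp [hcond]

lemma modBinom_pascal (n q : ℕ) (s : ℤ) :
    modBinom (n+1) q s = modBinom n q s + modBinom n q (s-1) := by
  have key : ∀ m : ℕ, modBinom m q s
      = (if (((0:ℕ):ℤ) - s) % q = 0 then m.choose 0 else 0)
        + ∑ j ∈ Finset.range m, (if (((j+1:ℕ):ℤ) - s) % q = 0 then m.choose (j+1) else 0) := by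
    intro m
    unfold modBinom
    rw [Finset.sum_range_succ', add_comm]
  rw [key (n+1)]
  have step : ∀ j ∈ Finset.range (n+1),
      (if (((j+1:ℕ):ℤ) - s) % q = 0 then (n+1).choose (j+1) else 0)
      = (if (((j+1:ℕ):ℤ) - s) % q = 0 then n.choose (j+1) else 0)
        + (if ((j:ℤ) - (s-1)) % q = 0 then n.choose j else 0) := by
    intro j _
    have hc : (((j+1:ℕ):ℤ) - s) % q = 0 ↔ ((j:ℤ) - (s-1)) % q = 0 :=
      emod_cond_congr ⟨0, by push_cast; ring⟩
    rw [Nat.choose_succ_succ]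
    by_cases h : (((j+1:ℕ):ℤ) - s) % q = 0
    · rw [if_pos h, if_pos h, if_pos (hc.mp h)]; ring
    · rw [if_neg h, if_neg h, if_neg (fun hx => h (hc.mpr hx))]
  rw [Finset.sum_congr rfl step, Finset.sum_add_distrib]
  have h1 : (if (((0:ℕ):ℤ) - s) % q = 0 then (n+1).choose 0 else 0)
      + ∑ j ∈ Finset.range (n+1), (if (((j+1:ℕ):ℤ) - s) % q = 0 then n.choose (j+1) else 0)
      = modBinom n q s := by
    rw [key n, Finset.sum_range_succ]
    simp
  have h2 : (∑ j ∈ Finset.range (n+1), if ((j:ℤ) - (s-1)) % q = 0 then n.choose j else 0)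
      = modBinom n q (s-1) := rfl
  rw [← h1, ← h2]; ring

lemma modBinom_unimodal (q : ℕ) : ∀ (n : ℕ) (s : ℤ), (n:ℤ) ≤ 2*s → 2*s ≤ (n:ℤ) + q - 2 →
    modBinom n q (s+1) ≤ modBinom n q s := by
  intro n
  induction n with
  | zero =>
    intro s h0 h1
    have hq : 2 ≤ q := by omega
    have hs : 0 ≤ s := by omega
    have hne : modBinom 0 q (s+1) = 0 := by
      unfold modBinom
      rw [Finset.sum_range_one, if_neg]
      intro hc
      rw [← Int.dvd_iff_emod_eq_zero] at hc
      have hd : (q:ℤ) ∣ (s+1) := (dvd_neg).mp (by simpa using hc)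
      have := Int.le_of_dvd (by omega) hd
      omega
    omega
  | succ n ih =>
    intro s h0 h1
    rw [modBinom_pascal, modBinom_pascal]
    have hs1 : s + 1 - 1 = s := by ring
    rw [hs1]
    have part1 : modBinom n q (s+1) ≤ modBinom n q s := by
      by_cases hcase : 2*s ≤ (n:ℤ) + q - 2
      · exact ih s (by push_cast at h0 ⊢; omega) hcase
      · -- 2*s = n + q - 1 : equality case
        have h2 : 2*s = (n:ℤ) + q - 1 := by push_cast at h1 ⊢; omega
        have heq : modBinom n q (s+1) = modBinom n q s := by
          rw [modBinom_symm n q (s+1)]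
          exact modBinom_congr n q ⟨-1, by linarith⟩
        exact le_of_eq heq
    have part2 : modBinom n q s ≤ modBinom n q (s-1) := by
      by_cases hcase : (n:ℤ) ≤ 2*(s-1)
      · have := ih (s-1) hcase (by push_cast at h1 ⊢; omega)
        have hss : s - 1 + 1 = s := by ring
        rwa [hss] at this
      · have h2 : 2*s = (n:ℤ) + 1 := by push_cast at h0 ⊢; omega
        have : modBinom n q (s-1) = modBinom n q ((n:ℤ) - (s-1)) := modBinom_symm n q (s-1)
        have h3 : (n:ℤ) - (s-1) = s := by omega
        rw [h3] at this
        omega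
    omega

/-- Edge index: the `i`-th element added to the middle window of row `n`. -/
def eIdx (n i : ℕ) : ℤ :=
  if (n + i) % 2 = 0 then ((n:ℤ) + i) / 2 else ((n:ℤ) - i - 1) / 2

lemma eIdx_spec (n i : ℕ) :
    2 * eIdx n i = if (n + i) % 2 = 0 then ((n:ℤ) + i) else ((n:ℤ) - i - 1) := by
  unfold eIdx
  by_cases h : (n + i) % 2 = 0 <;> simp [h] <;> omega

/-- Our version of the middle sum: sum of the first `k` edge classes. -/
def Gfun (q n k : ℕ) : ℕ := ∑ i ∈ Finset.range k, modBinom n q (eIdx n i)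

lemma Gfun_succ (q n k : ℕ) : Gfun q n (k+1) = Gfun q n k + modBinom n q (eIdx n k) :=
  Finset.sum_range_succ _ k

/-- Increment Pascal: base pair. -/
lemma incr_pascal_zero (q n : ℕ) :
    modBinom (n+1) q (eIdx (n+1) 0) = modBinom n q (eIdx n 0) + modBinom n q (eIdx n 1) := by
  have e0 := eIdx_spec (n+1) 0
  have f0 := eIdx_spec n 0
  have f1 := eIdx_spec n 1
  rw [modBinom_pascal]
  by_cases h : n % 2 = 0
  · -- n even : eIdx (n+1) 0 = n/2, pair (n/2, n/2 - 1); eIdx n 0 = n/2, eIdx n 1 = n/2 - 1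
    have h1 : eIdx (n+1) 0 = eIdx n 0 := by omega
    rw [h1]
    have h2 : eIdx n 0 - 1 = eIdx n 1 := by omega
    rw [h2]
  · have h1 : eIdx (n+1) 0 = eIdx n 1 := by omega
    rw [h1]
    have h2 : eIdx n 1 - 1 = eIdx n 0 := by omega
    rw [h2, add_comm]

/-- Increment Pascal: general pair, `i ≥ 1`. -/
lemma incr_pascal (q n i : ℕ) :
    modBinom (n+1) q (eIdx (n+1) (i+1))
      = modBinom n q (eIdx n (i+2)) + modBinom n q (eIdx n i) := by
  have e0 := eIdx_spec (n+1) (i+1)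
  have f0 := eIdx_spec n (i+2)
  have f1 := eIdx_spec n i
  rw [modBinom_pascal]
  by_cases h : (n + i) % 2 = 0
  · -- n+i even, n+1+i+1 even: eIdx (n+1) (i+1) = (n+i+2)/2; eIdx n (i+2) = (n+i+2)/2; eIdx n i = (n+i)/2
    have h1 : eIdx (n+1) (i+1) = eIdx n (i+2) := by omega
    rw [h1]
    have h2 : eIdx n (i+2) - 1 = eIdx n i := by omega
    rw [h2]
  · -- n+i odd: eIdx (n+1) (i+1) = (n-i)/2 = eIdx n i; minus 1 = (n-i-2)/2 = eIdx n (i+2)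
    have h1 : eIdx (n+1) (i+1) = eIdx n i := by omega
    rw [h1]
    have h2 : eIdx n i - 1 = eIdx n (i+2) := by omega
    rw [h2, add_comm]

/-- Pascal identity for `Gfun`. -/
lemma Gfun_pascal (q n k : ℕ) :
    Gfun q (n+1) (k+1) = Gfun q n (k+2) + Gfun q n k := by
  induction k with
  | zero =>
    have : Gfun q (n+1) 1 = modBinom (n+1) q (eIdx (n+1) 0) := by
      unfold Gfun; rw [Finset.sum_range_one]
    rw [this, incr_pascal_zero]
    unfold Gfun
    rw [Finset.sum_range_succ, Finset.sum_range_one]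
    simp [Finset.sum_range_zero]
  | succ k ih =>
    rw [Gfun_succ q (n+1) (k+1), ih, incr_pascal]
    show _ = Gfun q n (k+2+1) + Gfun q n (k+1)
    rw [Gfun_succ q n (k+2), Gfun_succ q n k]
    ring

/-- The increments are monotonically nonincreasing for `i ≤ q - 2`. -/
lemma incr_mono (q n i : ℕ) (hi : (i:ℤ) ≤ (q:ℤ) - 2) :
    modBinom n q (eIdx n (i+1)) ≤ modBinom n q (eIdx n i) := by
  have f0 := eIdx_spec n i
  have f1 := eIdx_spec n (i+1)
  by_cases h : (n + i) % 2 = 0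
  · -- eIdx n i = s = (n+i)/2 ; eIdx n (i+1) = (n-i-2)/2 = s - (i+1)
    set s : ℤ := eIdx n i with hs
    have h2s : 2 * s = (n:ℤ) + i := by omega
    have hrefl : eIdx n (i+1) = (n:ℤ) - (s+1) := by omega
    have : modBinom n q (eIdx n (i+1)) = modBinom n q (s+1) := by
      rw [hrefl, ← modBinom_symm]
    rw [this]
    exact modBinom_unimodal q n s (by omega) (by omega)
  · -- equality by symmetry
    have hrefl : eIdx n (i+1) = (n:ℤ) - eIdx n i := by omega
    rw [hrefl, ← modBinom_symm]

lemma incr_antitone (q n : ℕ) : ∀ (d i : ℕ), (i:ℤ) + d ≤ (q:ℤ) - 1 →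
    modBinom n q (eIdx n (i+d)) ≤ modBinom n q (eIdx n i) := by
  intro d
  induction d with
  | zero => intro i _; exact le_rfl
  | succ d ih =>
    intro i h
    have h1 : modBinom n q (eIdx n (i+d+1)) ≤ modBinom n q (eIdx n (i+d)) :=
      incr_mono q n (i+d) (by omega)
    have h2 := ih i (by omega)
    calc modBinom n q (eIdx n (i+(d+1))) = modBinom n q (eIdx n (i+d+1)) := by ring_nf
      _ ≤ modBinom n q (eIdx n (i+d)) := h1
      _ ≤ modBinom n q (eIdx n i) := h2

lemma Gfun_mono (q n : ℕ) {k k' : ℕ} (h : k ≤ k') : Gfun q n k ≤ Gfun q n k' :=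
  Finset.sum_le_sum_of_subset (Finset.range_subset_range.mpr h)

lemma Gfun_concave (q n : ℕ) : ∀ (j m u v : ℕ), u = m + 2 + j → u + v = 2*m + 2 → u ≤ q →
    Gfun q n u + Gfun q n v ≤ Gfun q n (m+2) + Gfun q n m := by
  intro j
  induction j with
  | zero =>
    intro m u v hu huv hq
    have : u = m + 2 := by omega
    have : v = m := by omega
    simp_all
  | succ j ih =>
    intro m u v hu huv hq
    have hv : v = m - 1 - j ∧ m ≥ j + 1 := by omega
    -- single balancing step : u = (u-1) + 1
    set w := m + 2 + j with hw
    have hu' : u = w + 1 := by omega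
    have step : Gfun q n u + Gfun q n v ≤ Gfun q n w + Gfun q n (v+1) := by
      rw [hu', Gfun_succ, Gfun_succ]
      have hD : modBinom n q (eIdx n w) ≤ modBinom n q (eIdx n v) := by
        have : w = v + (w - v) := by omega
        rw [this]
        exact incr_antitone q n (w - v) v (by omega)
      omega
    have := ih m w (v+1) (by omega) (by omega) (by omega)
    omega

lemma Gfun_ge_pow (q n : ℕ) [NeZero q] : 2^n ≤ Gfun q n q := by
  have hq : 0 < q := Nat.pos_of_ne_zero (NeZero.ne q)
  -- the edge residues are pairwise distinct mod q
  have hinj : Set.InjOn (fun i => ((eIdx n i : ℤ) : ZMod q)) (Finset.range q) := by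
    intro i hi i' hi' hcast
    simp only [Finset.coe_range, Set.mem_Iio] at hi hi'
    have hdvd : (q:ℤ) ∣ (eIdx n i - eIdx n i') := by
      have := (ZMod.intCast_eq_intCast_iff' _ _ _).mp hcast
      exact Int.ModEq.dvd (Int.ModEq.symm this)
    have si := eIdx_spec n i
    have si' := eIdx_spec n i'
    have heq : eIdx n i = eIdx n i' := by
      by_contra hne
      have habs : (q:ℤ) ≤ |eIdx n i - eIdx n i'| :=
        Int.le_of_dvd (abs_pos.mpr (sub_ne_zero.mpr hne)) ((dvd_abs _ _).mpr hdvd)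
      have hub : |eIdx n i - eIdx n i'| < (q:ℤ) := abs_sub_lt_iff.mpr ⟨by omega, by omega⟩
      omega
    omega
  -- hence they cover all residues
  have hcover : ∀ j : ℕ, ∃ i ∈ Finset.range q, ((j:ℤ) - eIdx n i) % q = 0 := by
    intro j
    have hcard : ((Finset.range q).image (fun i => ((eIdx n i : ℤ) : ZMod q))).card = q := by
      rw [Finset.card_image_of_injOn hinj, Finset.card_range]
    have huniv : ((Finset.range q).image (fun i => ((eIdx n i : ℤ) : ZMod q))) = Finset.univ := by
      apply Finset.eq_univ_of_card
      rw [hcard, ZMod.card]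
    have : ((j:ℤ) : ZMod q) ∈ (Finset.range q).image (fun i => ((eIdx n i : ℤ) : ZMod q)) := by
      rw [huniv]; exact Finset.mem_univ _
    obtain ⟨i, hi, hcast⟩ := Finset.mem_image.mp this
    refine ⟨i, hi, ?_⟩
    rw [← Int.dvd_iff_emod_eq_zero]
    exact Int.ModEq.dvd (Int.ModEq.symm ((ZMod.intCast_eq_intCast_iff' _ _ _).mp hcast.symm))
  calc 2^n = ∑ j ∈ Finset.range (n+1), n.choose j := (Nat.sum_range_choose n).symm
    _ ≤ ∑ j ∈ Finset.range (n+1), ∑ i ∈ Finset.range q,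
          (if ((j:ℤ) - eIdx n i) % q = 0 then n.choose j else 0) := by
        apply Finset.sum_le_sum
        intro j _
        obtain ⟨i, hi, hcond⟩ := hcover j
        have h2 : (if ((j:ℤ) - eIdx n i) % (q:ℤ) = 0 then n.choose j else 0)
            ≤ ∑ i ∈ Finset.range q, (if ((j:ℤ) - eIdx n i) % (q:ℤ) = 0 then n.choose j else 0) :=
          Finset.single_le_sum (f := fun i => if ((j:ℤ) - eIdx n i) % (q:ℤ) = 0 then n.choose j else 0)
            (fun i _ => Nat.zero_le _) hi
        rwa [if_pos hcond] at h2
    _ = Gfun q n q := by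
        rw [Finset.sum_comm]; rfl

lemma shift_invariant_univ {q : ℕ} [NeZero q] {a : ZMod q} (ha : IsUnit a)
    {T : Finset (ZMod q)} (hT : T.image (fun t => t - a) = T) (hne : T.Nonempty) :
    T = Finset.univ := by
  obtain ⟨t₀, ht₀⟩ := hne
  have hstep : ∀ x ∈ T, x - a ∈ T := by
    intro x hx
    rw [← hT]
    exact Finset.mem_image_of_mem _ hx
  have hmul : ∀ m : ℕ, t₀ - (m : ZMod q) * a ∈ T := by
    intro m
    induction m with
    | zero => simpa using ht₀
    | succ m ih =>
      have := hstep _ ih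
      have harith : t₀ - (m : ZMod q) * a - a = t₀ - ((m+1 : ℕ) : ZMod q) * a := by
        push_cast; ring
      rwa [harith] at this
  apply Finset.eq_univ_iff_forall.mpr
  intro b
  obtain ⟨u, hu⟩ := ha
  set c : ZMod q := (t₀ - b) * (↑u⁻¹ : ZMod q) with hc
  have hca : c * a = t₀ - b := by
    rw [hc, mul_assoc, ← hu]
    rw [Units.inv_mul]
    ring
  have hval : ((c.val : ℕ) : ZMod q) = c := by
    rw [ZMod.natCast_val, ZMod.cast_id]
  have := hmul c.val
  rw [hval, hca] at this
  simpa using this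

lemma griggs_key (q : ℕ) [NeZero q] {ι : Type*} [DecidableEq ι] (a : ι → ZMod q)
    (s : Finset ι) :
    (∀ i ∈ s, IsUnit (a i)) → ∀ (T : Finset (ZMod q)),
    ((s.powerset.filter (fun I => (∑ i ∈ I, a i) ∈ T)).card ≤ Gfun q s.card T.card) := by
  classical
  induction s using Finset.induction_on with
  | empty =>
    intro _ T
    rcases T.eq_empty_or_nonempty with hT | hT
    · subst hT
      simp
    · have hT1 : 1 ≤ T.card := Finset.card_pos.mpr hT
      have hle1 : ((∅ : Finset ι).powerset.filter (fun I => (∑ i ∈ I, a i) ∈ T)).card ≤ 1 := by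
        calc _ ≤ (∅ : Finset ι).powerset.card := Finset.card_filter_le _ _
          _ = 1 := by simp
      have hG : 1 ≤ Gfun q 0 T.card := by
        have h1 : Gfun q 0 1 = modBinom 0 q (eIdx 0 0) := by
          unfold Gfun; rw [Finset.sum_range_one]
        have he : eIdx 0 0 = 0 := by have := eIdx_spec 0 0; omega
        have hm : modBinom 0 q 0 = 1 := by
          unfold modBinom
          rw [Finset.sum_range_one]
          simp
        have : Gfun q 0 1 = 1 := by rw [h1, he, hm]
        calc 1 = Gfun q 0 1 := this.symm
          _ ≤ Gfun q 0 T.card := Gfun_mono q 0 hT1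
      simpa using le_trans hle1 hG
  | @insert x s hx ih =>
    intro ha T
    have hax : IsUnit (a x) := ha x (Finset.mem_insert_self x s)
    have has : ∀ i ∈ s, IsUnit (a i) := fun i hi => ha i (Finset.mem_insert_of_mem hi)
    have hcard : (insert x s).card = s.card + 1 := Finset.card_insert_of_notMem hx
    rcases T.eq_empty_or_nonempty with hTe | hTne
    · subst hTe
      simp
    set T2 : Finset (ZMod q) := T.image (fun t => t - a x) with hT2
    -- decompose the filtered powerset
    have hsplit : ((insert x s).powerset.filter (fun I => (∑ i ∈ I, a i) ∈ T)).card
        = (s.powerset.filter (fun I => (∑ i ∈ I, a i) ∈ T)).card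
          + (s.powerset.filter (fun I => (∑ i ∈ I, a i) ∈ T2)).card := by
      rw [Finset.powerset_insert, Finset.filter_union]
      rw [Finset.card_union_of_disjoint]
      · congr 1
        apply Finset.card_nbij' (fun I => I.erase x) (fun J => insert x J)
        · intro I hI
          simp only [Finset.mem_coe, Finset.mem_filter, Finset.mem_image, Finset.mem_powerset] at hI ⊢
          obtain ⟨⟨J, hJs, hJEq⟩, hIT⟩ := hI
          have hxJ : x ∉ J := fun hc => hx (hJs hc)
          have hIer : I.erase x = J := by rw [← hJEq, Finset.erase_insert hxJ]
          rw [hIer]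
          refine ⟨hJs, ?_⟩
          rw [← hJEq, Finset.sum_insert hxJ] at hIT
          rw [hT2, Finset.mem_image]
          exact ⟨a x + ∑ i ∈ J, a i, hIT, by ring⟩
        · intro J hJ
          simp only [Finset.mem_coe, Finset.mem_filter, Finset.mem_image, Finset.mem_powerset] at hJ ⊢
          obtain ⟨hJs, hJT⟩ := hJ
          have hxJ : x ∉ J := fun hc => hx (hJs hc)
          refine ⟨⟨J, hJs, rfl⟩, ?_⟩
          rw [Finset.sum_insert hxJ]
          rw [hT2, Finset.mem_image] at hJT
          obtain ⟨t, htT, htEq⟩ := hJT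
          have hteq : t = a x + ∑ i ∈ J, a i := by
            have h' : t - a x = ∑ i ∈ J, a i := htEq
            linear_combination h'
          rwa [← hteq]
        · intro I hI
          simp only [Finset.mem_coe, Finset.mem_filter, Finset.mem_image, Finset.mem_powerset] at hI
          obtain ⟨⟨J, hJs, hJEq⟩, _⟩ := hI
          have hxI : x ∈ I := by rw [← hJEq]; exact Finset.mem_insert_self x J
          exact Finset.insert_erase hxI
        · intro J hJ
          simp only [Finset.mem_coe, Finset.mem_filter, Finset.mem_powerset] at hJ
          have hxJ : x ∉ J := fun hc => hx (hJ.1 hc)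
          exact Finset.erase_insert hxJ
      · rw [Finset.disjoint_left]
        intro I hI hI'
        simp only [Finset.mem_filter, Finset.mem_powerset, Finset.mem_image] at hI hI'
        obtain ⟨J, _, hJEq⟩ := hI'.1
        have : x ∈ I := by rw [← hJEq]; exact Finset.mem_insert_self x J
        exact hx (hI.1 this)
    rw [hsplit]
    -- inclusion-exclusion on targets
    have hie : (s.powerset.filter (fun I => (∑ i ∈ I, a i) ∈ T)).card
          + (s.powerset.filter (fun I => (∑ i ∈ I, a i) ∈ T2)).card
        = (s.powerset.filter (fun I => (∑ i ∈ I, a i) ∈ T ∪ T2)).card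
          + (s.powerset.filter (fun I => (∑ i ∈ I, a i) ∈ T ∩ T2)).card := by
      rw [Finset.card_filter, Finset.card_filter, Finset.card_filter, Finset.card_filter,
        ← Finset.sum_add_distrib, ← Finset.sum_add_distrib]
      refine Finset.sum_congr rfl fun I _ => ?_
      by_cases h1 : (∑ i ∈ I, a i) ∈ T <;> by_cases h2 : (∑ i ∈ I, a i) ∈ T2 <;>
        simp [Finset.mem_union, Finset.mem_inter, h1, h2]
    rw [hie]
    have hT2card : T2.card = T.card := Finset.card_image_of_injective T sub_left_injective
    by_cases hTT2 : T2 = T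
    · -- invariant case : T = univ
      have hTuniv : T = Finset.univ := shift_invariant_univ hax hTT2 hTne
      have hcond : ∀ I : Finset ι, (∑ i ∈ I, a i) ∈ T := by
        intro I; rw [hTuniv]; exact Finset.mem_univ _
      have hTq : T.card = q := by rw [hTuniv, Finset.card_univ, ZMod.card]
      have hps : ∀ (S : Finset (ZMod q)), T ⊆ S →
          (s.powerset.filter (fun I => (∑ i ∈ I, a i) ∈ S)).card = 2 ^ s.card := by
        intro S hS
        rw [Finset.filter_true_of_mem (fun I _ => hS (hcond I)), Finset.card_powerset]
      rw [hps (T ∪ T2) Finset.subset_union_left, hps (T ∩ T2) (by rw [hTT2]; simp)]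
      rw [hcard, hTq]
      calc 2 ^ s.card + 2 ^ s.card = 2 ^ (s.card + 1) := by ring
        _ ≤ Gfun q (s.card + 1) q := Gfun_ge_pow q (s.card+1)
    · -- main case
      set k := T.card with hk
      have hk1 : 1 ≤ k := Finset.card_pos.mpr hTne
      set u := (T ∪ T2).card with hu
      set v := (T ∩ T2).card with hv
      have huv : u + v = 2 * k := by
        rw [hu, hv, Finset.card_union_add_card_inter, ← hk, hT2card]; ring
      have hvk : v < k := by
        rcases Nat.lt_or_ge v k with h | h
        · exact h
        · exfalso
          have hsub : T ∩ T2 ⊆ T := Finset.inter_subset_left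
          have : T ∩ T2 = T := Finset.eq_of_subset_of_card_le hsub (by omega)
          have hTsub : T ⊆ T2 := by rw [← this]; exact Finset.inter_subset_right
          exact hTT2 (Finset.eq_of_subset_of_card_le hTsub (by omega)).symm
      have huq : u ≤ q := by
        calc u ≤ Fintype.card (ZMod q) := Finset.card_le_univ _
          _ = q := ZMod.card q
      have hIH1 := ih has (T ∪ T2)
      have hIH2 := ih has (T ∩ T2)
      rw [← hu] at hIH1
      rw [← hv] at hIH2
      have hconc : Gfun q s.card u + Gfun q s.card v
          ≤ Gfun q s.card (k+1) + Gfun q s.card (k-1) := by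
        have := Gfun_concave q s.card (u - (k+1)) (k-1) u v (by omega) (by omega) huq
        have he1 : k - 1 + 2 = k + 1 := by omega
        rwa [he1] at this
      have hpas : Gfun q (s.card + 1) k = Gfun q s.card (k+1) + Gfun q s.card (k-1) := by
        have := Gfun_pascal q s.card (k-1)
        have he1 : k - 1 + 1 = k := by omega
        have he2 : k - 1 + 2 = k + 1 := by omega
        rwa [he1, he2] at this
      rw [hcard, hpas]
      omega

/-- The sum of the `k` middle mod-`q` binomial coefficients,
`_{(n-k)/2 ≤ j < (n+k)/2} C(n,j)_q` (the integers `j` in question all lie in `[-q, n+q]`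
when `k ≤ q`). -/
noncomputable def middleSum (n q k : ℕ) : ℕ :=
  ∑ j ∈ Finset.Icc (-(q : ℤ)) ((n : ℤ) + q),
    if (n : ℤ) - k ≤ 2 * j ∧ 2 * j < (n : ℤ) + k then modBinom n q j else 0

theorem griggs_zero_sum (q n : ℕ) [NeZero q] (a : Fin n → ZMod q)
    (ha : ∀ i, IsUnit (a i)) :
    ((Finset.univ : Finset (Finset (Fin n))).filter
        (fun I => (∑ i ∈ I, a i) = 0)).card ≤ modBinom n q (n / 2 : ℕ) := by
  classical
  have hkey := griggs_key q a Finset.univ (fun i _ => ha i) ({0} : Finset (ZMod q))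
  have hre : ((Finset.univ : Finset (Finset (Fin n))).filter
        (fun I => (∑ i ∈ I, a i) = 0)).card
      = ((Finset.univ : Finset (Fin n)).powerset.filter
        (fun I => (∑ i ∈ I, a i) ∈ ({0} : Finset (ZMod q)))).card := by
    rw [Finset.powerset_univ]
    congr 1
    apply Finset.filter_congr
    intro I _
    simp
  rw [hre]
  have hcards : (Finset.univ : Finset (Fin n)).card = n := by simp
  have hsingle : ({0} : Finset (ZMod q)).card = 1 := Finset.card_singleton _
  rw [hcards, hsingle] at hkey
  have hG1 : Gfun q n 1 = modBinom n q (eIdx n 0) := by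
    unfold Gfun; rw [Finset.sum_range_one]
  have he : eIdx n 0 = ((n / 2 : ℕ) : ℤ) := by
    have := eIdx_spec n 0
    omega
  rw [hG1, he] at hkey
  exact hkey
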